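/- arXiv:1806.09725 — 2 statements merged into one kernel-verified Lean document; each statement's English description precedes it below -/
import Mathlib

section
/- Let M be symmetric with σ(M) ⊂ (0, μ) for μ ∈ (1,2], Z := (μ−1)(μI − M)^{-1}, and suppose λ̃ is a number satisfying |λ_max(Z) − λ̃| ≤ 0.4·λ_max(Z). If λ̃ < 1, then λ_max(Z) < 2 and consequently λ_max(M) < (1+μ)/2. -/
open Matrix

lemma aux_mem_spectrum {N : ℕ} (Z : Matrix (Fin N) (Fin N) ℝ) (t : ℝ)
    (v : Fin N → ℝ) (hv : v ≠ 0) (hZv : Z *ᵥ v = t • v) : t ∈ spectrum ℝ Z := by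
  rw [spectrum.mem_iff]
  intro hu
  have h0 : (algebraMap ℝ (Matrix (Fin N) (Fin N) ℝ) t - Z) *ᵥ v = 0 := by
    rw [sub_mulVec, Algebra.algebraMap_eq_smul_one, smul_mulVec, one_mulVec, hZv, sub_self]
  obtain ⟨u, hu⟩ := hu
  apply hv
  have h1 : (↑u⁻¹ : Matrix (Fin N) (Fin N) ℝ) * (algebraMap ℝ (Matrix (Fin N) (Fin N) ℝ) t - Z) = 1 := by
    rw [← hu]; exact u.inv_mul
  calc v = ((↑u⁻¹ : Matrix (Fin N) (Fin N) ℝ) * (algebraMap ℝ (Matrix (Fin N) (Fin N) ℝ) t - Z)) *ᵥ v := by rw [h1, one_mulVec]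
    _ = 0 := by rw [← Matrix.mulVec_mulVec, h0, mulVec_zero]

/-- `M` symmetric with spectrum in `(0,μ)`, `μ ∈ (1,2]`,
`Z := (μ−1)•(μ•I−M)⁻¹`, `λ̃` with `|λ_max(Z) − λ̃| ≤ 0.4·λ_max(Z)`.
If `λ̃ < 1` then `λ_max(Z) < 2` and `λ_max(M) < (1+μ)/2`. -/
theorem stmt5 {N : ℕ} (M : Matrix (Fin N) (Fin N) ℝ) (hM : M.IsHermitian)
    (μ : ℝ) (hμ : 1 < μ ∧ μ ≤ 2)
    (hspec : ∀ i, hM.eigenvalues i ∈ Set.Ioo 0 μ)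
    (Z : Matrix (Fin N) (Fin N) ℝ)
    (hZ : Z = (μ - 1) • (μ • (1 : Matrix (Fin N) (Fin N) ℝ) - M)⁻¹)
    (hZH : Z.IsHermitian)
    (L : ℝ) (hL : IsGreatest (Set.range hZH.eigenvalues) L)
    (lam : ℝ) (hlam : |L - lam| ≤ 0.4 * L)
    (hlt : lam < 1) :
    L < 2 ∧ ∀ j, hM.eigenvalues j < (1 + μ) / 2 := by
  have hL2 : L < 2 := by
    have := abs_le.mp hlam
    linarith [this.1, this.2]
  refine ⟨hL2, fun j => ?_⟩
  -- A = μ•1 - M is a unit since μ ∉ spectrum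
  set A : Matrix (Fin N) (Fin N) ℝ := μ • (1 : Matrix (Fin N) (Fin N) ℝ) - M with hA
  have hAunit : IsUnit A := by
    have hμs : μ ∉ spectrum ℝ M := by
      rw [hM.spectrum_real_eq_range_eigenvalues]
      rintro ⟨i, hi⟩
      exact absurd hi (ne_of_lt (hspec i).2)
    rw [spectrum.mem_iff, not_not] at hμs
    rwa [Algebra.algebraMap_eq_smul_one] at hμs
  have hAinv : A⁻¹ * A = 1 := nonsing_inv_mul A (isUnit_iff_isUnit_det A |>.mp hAunit)
  set v : Fin N → ℝ := ⇑(hM.eigenvectorBasis j) with hv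
  have hvne : v ≠ 0 := by
    intro h
    have := hM.eigenvectorBasis.orthonormal.1 j
    rw [hv] at h
    rw [show hM.eigenvectorBasis j = 0 from by ext k; exact congrFun h k] at this
    simp at this
  set lj : ℝ := hM.eigenvalues j with hlj
  have hc : 0 < μ - lj := by linarith [(hspec j).2]
  have hMv : M *ᵥ v = lj • v := hM.mulVec_eigenvectorBasis j
  have hAv : A *ᵥ v = (μ - lj) • v := by
    rw [hA, sub_mulVec, smul_mulVec, one_mulVec, hMv, sub_smul]
  have hAiv : A⁻¹ *ᵥ v = (μ - lj)⁻¹ • v := by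
    have h1 : (μ - lj) • (A⁻¹ *ᵥ v) = v := by
      rw [← mulVec_smul, ← hAv, mulVec_mulVec, hAinv, one_mulVec]
    have h2 := congrArg (fun w => (μ - lj)⁻¹ • w) h1
    simpa [smul_smul, inv_mul_cancel₀ (ne_of_gt hc)] using h2
  have hZv : Z *ᵥ v = ((μ - 1) * (μ - lj)⁻¹) • v := by
    rw [hZ, smul_mulVec, hAiv, smul_smul]
  have hmem : (μ - 1) * (μ - lj)⁻¹ ∈ Set.range hZH.eigenvalues := by
    rw [← hZH.spectrum_real_eq_range_eigenvalues]
    exact aux_mem_spectrum Z _ v hvne hZv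
  have hle : (μ - 1) * (μ - lj)⁻¹ ≤ L := hL.2 hmem
  have h2 : (μ - 1) * (μ - lj)⁻¹ < 2 := lt_of_le_of_lt hle hL2
  rw [mul_inv_lt_iff₀ hc] at h2
  linarith
end

section
/- Let A be a regular real symmetric matrix with all eigenvalues having absolute value in (μ̌, μ̂), and M := I − (1/μ̂)·A. Then A is positive definite if and only if λ_max(M) ≤ 1 − μ̌/μ̂; and A fails to be positive definite if and only if λ_max(M) ≥ 1 + μ̌/μ̂. -/
open Matrix Pointwise

lemma posDef_of_posSemidef_isUnit {n : Type*} [Fintype n] [DecidableEq n]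
    {A : Matrix n n ℝ} (h : A.PosSemidef) (hd : IsUnit A.det) : A.PosDef := by
  exact h.posDef_iff_isUnit.mpr ((Matrix.isUnit_iff_isUnit_det A).2 hd)

/-- `A` symmetric invertible with all eigenvalues of absolute
value in `(μ̌, μ̂)`, `M := I − A/μ̂`. Then `A` is positive definite iff
`λ_max(M) ≤ 1 − μ̌/μ̂`, and `A` is not positive definite iff `λ_max(M) ≥ 1 + μ̌/μ̂`. -/
theorem stmt10 {N : ℕ} (A : Matrix (Fin N) (Fin N) ℝ) (hA : A.IsHermitian)
    (hreg : IsUnit A.det)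
    (μlo μhi : ℝ) (hlo : 0 < μlo) (hlt : μlo < μhi)
    (hspec : ∀ i, hA.eigenvalues i ∈ Set.Ioo μlo μhi ∪ Set.Ioo (-μhi) (-μlo))
    (M : Matrix (Fin N) (Fin N) ℝ)
    (hMdef : M = 1 - μhi⁻¹ • A) (hM : M.IsHermitian)
    (L : ℝ) (hL : IsGreatest (Set.range hM.eigenvalues) L) :
    (A.PosDef ↔ L ≤ 1 - μlo / μhi) ∧ (¬A.PosDef ↔ 1 + μlo / μhi ≤ L) := by
  have hμhi : (0:ℝ) < μhi := hlo.trans hlt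
  have hμne : μhi ≠ 0 := hμhi.ne'
  -- spectrum computation
  have hspecM : spectrum ℝ M = {(1:ℝ)} - μhi⁻¹ • spectrum ℝ A := by
    rw [hMdef]
    have h1 : (1 : Matrix (Fin N) (Fin N) ℝ) = algebraMap ℝ _ (1:ℝ) := by simp
    rw [h1, ← spectrum.singleton_sub_eq]
    congr 1
    rw [show μhi⁻¹ • A = (Units.mk0 μhi⁻¹ (inv_ne_zero hμne)) • A from rfl,
      spectrum.unit_smul_eq_smul]
    ext y
    simp [Set.mem_smul_set, Units.smul_def]
  have hrange : Set.range hM.eigenvalues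
      = (fun t => 1 - μhi⁻¹ * t) '' Set.range hA.eigenvalues := by
    rw [← hM.spectrum_real_eq_range_eigenvalues, hspecM, ← hA.spectrum_real_eq_range_eigenvalues]
    ext y
    simp only [Set.mem_sub, Set.mem_singleton_iff, Set.mem_smul_set, Set.mem_image]
    constructor
    · rintro ⟨a, ha, b, ⟨x, hx, rfl⟩, rfl⟩
      exact ⟨x, hx, by rw [ha, smul_eq_mul]⟩
    · rintro ⟨x, hx, rfl⟩
      exact ⟨1, rfl, μhi⁻¹ * x, ⟨x, hx, rfl⟩, rfl⟩
  -- key implications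
  have key1 : A.PosDef → L ≤ 1 - μlo / μhi := by
    intro hpd
    obtain ⟨x, hx, hxL⟩ : ∃ x ∈ Set.range hA.eigenvalues, 1 - μhi⁻¹ * x = L := by
      have h := hL.1; rw [hrange] at h; simpa using h
    obtain ⟨j, rfl⟩ := hx
    subst hxL
    have hpos : 0 < hA.eigenvalues j := hpd.eigenvalues_pos j
    rcases hspec j with h | h
    · have : μlo ≤ hA.eigenvalues j := le_of_lt h.1
      rw [div_eq_inv_mul]
      have := mul_le_mul_of_nonneg_left this (inv_nonneg.mpr hμhi.le)
      linarith
    · exact absurd hpos (by have := h.2; simp only [Set.mem_Ioo] at h; nlinarith)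
  have key2 : ¬A.PosDef → 1 + μlo / μhi ≤ L := by
    intro hnpd
    -- some eigenvalue is nonpositive
    by_contra hcon
    apply hnpd
    apply posDef_of_posSemidef_isUnit _ hreg
    apply hA.posSemidef_iff_eigenvalues_nonneg.mpr
    intro i
    rw [Pi.zero_apply]
    by_contra hneg
    push_neg at hneg
    rcases hspec i with h | h
    · linarith [h.1]
    · -- eigenvalue in (-μhi, -μlo); corresponding M-eigenvalue ≥ 1 + μlo/μhi
      have hmem : (1 - μhi⁻¹ * hA.eigenvalues i) ∈ Set.range hM.eigenvalues := by
        rw [hrange]; exact ⟨hA.eigenvalues i, ⟨i, rfl⟩, rfl⟩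
      have hle := hL.2 hmem
      have h2 : hA.eigenvalues i < -μlo := h.2
      have : 1 + μlo / μhi ≤ 1 - μhi⁻¹ * hA.eigenvalues i := by
        rw [div_eq_inv_mul]
        nlinarith [inv_pos.mpr hμhi]
      linarith
  have hgap : 1 - μlo / μhi < 1 + μlo / μhi := by
    have : 0 < μlo / μhi := div_pos hlo hμhi
    linarith
  constructor
  · constructor
    · exact key1
    · intro hle
      by_contra hnpd
      linarith [key2 hnpd]
  · constructor
    · exact key2
    · intro hge
      intro hpd
      linarith [key1 hpd]
end
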